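/- arXiv:1407.3706 — 4 statements merged into one kernel-verified Lean document; each statement's English description precedes it below -/
import Mathlib

section
/- Let H be a complex Hilbert space, T > 0, (λ_n)_{n ≥ 1} a sequence of positive real numbers and (Ψ_n)_{n ≥ 1} a sequence in H. Extend the indices to ℤ' = ℤ \ {0} by setting λ_{-n} = -λ_n and Ψ_{-n} = Ψ_n for n ≥ 1. Assume the family of functions {t ↦ e^{iλ_n t} Ψ_n}_{n ∈ ℤ'} is a Riesz sequence in L²((0, 2T); H), i.e. there exist 0 < m ≤ M such that for every finitely supported sequence (c_n)_{n ∈ ℤ'} of complex numbers, m Σ|c_n|² ≤ ∫₀^{2T} ‖Σ_n c_n e^{iλ_n t} Ψ_n‖² dt ≤ M Σ|c_n|². Then the families {t ↦ cos(λ_n t) Ψ_n}_{n ≥ 1} and {t ↦ sin(λ_n t) Ψ_n}_{n ≥ 1} are Riesz sequences in L²((0, T); H): there exist 0 < m' ≤ M' such that for every finitely supported complex sequence (c_n)_{n ≥ 1}, m' Σ|c_n|² ≤ ∫₀^{T} ‖Σ_n c_n cos(λ_n t) Ψ_n‖² dt ≤ M' Σ|c_n|², and the same two-sided inequality holds with cos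 replaced by sin. -/
open MeasureTheory Complex

lemma riesz_half_aux
    {H : Type*} [NormedAddCommGroup H] [InnerProductSpace ℂ H] [CompleteSpace H]
    (T : ℝ) (hT : 0 < T) (lam : ℤ → ℝ) (Ψ : ℤ → H)
    (hodd : ∀ n : ℤ, lam (-n) = -lam n)
    (heven : ∀ n : ℤ, Ψ (-n) = Ψ n)
    (m M : ℝ)
    (hriesz : ∀ (s : Finset ℤ), (∀ n ∈ s, n ≠ 0) → ∀ c : ℤ → ℂ,
      m * ∑ n ∈ s, ‖c n‖ ^ 2 ≤
          (∫ t in Set.Ioo (0 : ℝ) (2 * T),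
            ‖∑ n ∈ s, c n • (Complex.exp (Complex.I * (lam n : ℂ) * (t : ℂ)) • Ψ n)‖ ^ 2) ∧
        (∫ t in Set.Ioo (0 : ℝ) (2 * T),
            ‖∑ n ∈ s, c n • (Complex.exp (Complex.I * (lam n : ℂ) * (t : ℂ)) • Ψ n)‖ ^ 2) ≤
          M * ∑ n ∈ s, ‖c n‖ ^ 2)
    (f : ℝ → ℝ) (hf : Continuous f) (σ d : ℂ) (hσ : ‖σ‖ = 1) (hd : ‖d‖ = 2)
    (ε : ℝ) (hε : ε = 1 ∨ ε = -1) (hpar : ∀ x, f (-x) = ε * f x)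
    (hfe : ∀ θ : ℝ, ((f θ : ℝ) : ℂ) =
      (Complex.exp (θ * I) + σ * Complex.exp (-(θ * I))) / d)
    (s : Finset ℤ) (hs : ∀ n ∈ s, 0 < n) (c : ℤ → ℂ) :
    m / 4 * ∑ n ∈ s, ‖c n‖ ^ 2 ≤
        (∫ t in Set.Ioo (0 : ℝ) T, ‖∑ n ∈ s, c n • ((f (lam n * t) : ℂ) • Ψ n)‖ ^ 2) ∧
      (∫ t in Set.Ioo (0 : ℝ) T, ‖∑ n ∈ s, c n • ((f (lam n * t) : ℂ) • Ψ n)‖ ^ 2) ≤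
        M / 4 * ∑ n ∈ s, ‖c n‖ ^ 2 := by
  have hd0 : d ≠ 0 := by intro h; rw [h] at hd; simp at hd
  -- the symmetric index set and coefficients
  set negs : Finset ℤ := s.image (fun n => -n) with hnegs
  have hdisj : Disjoint s negs := by
    rw [Finset.disjoint_left]
    intro n hn hn'
    have h1 := hs n hn
    rcases Finset.mem_image.mp hn' with ⟨k, hk, rfl⟩
    have := hs k hk
    omega
  set s' : Finset ℤ := s ∪ negs with hs'
  have hne : ∀ n ∈ s', n ≠ 0 := by
    intro n hn
    rcases Finset.mem_union.mp hn with h | h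
    · exact (hs n h).ne'
    · rcases Finset.mem_image.mp h with ⟨k, hk, rfl⟩
      have := hs k hk; omega
  set c' : ℤ → ℂ := fun n =>
    (if 0 < n then c n else σ * c (-n)) * Complex.exp (-(Complex.I * lam n * T)) / d
    with hc'
  set F : ℝ → H := fun τ => ∑ n ∈ s, c n • ((f (lam n * τ) : ℂ) • Ψ n) with hF
  have hFcont : Continuous F := by
    apply continuous_finset_sum
    intro n _
    exact ((Complex.continuous_ofReal.comp (hf.comp (continuous_const.mul continuous_id))).smul
      continuous_const).const_smul _
  have hGcont : Continuous fun τ => ‖F τ‖ ^ 2 := (hFcont.norm).pow 2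
  -- norm of exp of purely imaginary
  have hexp1 : ∀ a : ℝ, ‖Complex.exp (-(I * a))‖ = 1 := by
    intro a; simp [Complex.norm_exp]
  -- coefficient norms
  have hcnorm : ∀ n ∈ s', ‖c' n‖ ^ 2 = ‖c (|n|)‖ ^ 2 / 4 := by
    intro n hn
    have hn0 : n ≠ 0 := hne n hn
    rcases lt_or_gt_of_ne hn0 with h | h
    · have : |n| = -n := abs_of_neg h
      rw [this, hc']
      simp only [if_neg (not_lt.mpr h.le)]
      have : Complex.I * (lam n : ℂ) * (T : ℂ) = Complex.I * ((lam n * T : ℝ) : ℂ) := by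
        push_cast; ring
      rw [norm_div, norm_mul, this, hexp1, hd, norm_mul, hσ]
      ring
    · have : |n| = n := abs_of_pos h
      rw [this, hc']
      simp only [if_pos h]
      have : Complex.I * (lam n : ℂ) * (T : ℂ) = Complex.I * ((lam n * T : ℝ) : ℂ) := by
        push_cast; ring
      rw [norm_div, norm_mul, this, hexp1, hd]
      ring
  have hsum' : ∑ n ∈ s', ‖c' n‖ ^ 2 = (∑ n ∈ s, ‖c n‖ ^ 2) / 2 := by
    rw [hs', Finset.sum_union hdisj, hnegs,
      Finset.sum_image (fun a _ b _ h => neg_injective h)]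
    have h1 : ∑ n ∈ s, ‖c' n‖ ^ 2 = ∑ n ∈ s, ‖c n‖ ^ 2 / 4 := by
      apply Finset.sum_congr rfl
      intro n hn
      have := hcnorm n (Finset.mem_union_left _ hn)
      rwa [abs_of_pos (hs n hn)] at this
    have h2 : ∑ n ∈ s, ‖c' (-n)‖ ^ 2 = ∑ n ∈ s, ‖c n‖ ^ 2 / 4 := by
      apply Finset.sum_congr rfl
      intro n hn
      have hmem : -n ∈ s' := Finset.mem_union_right _ (Finset.mem_image_of_mem _ hn)
      have := hcnorm _ hmem
      simpa [abs_neg, abs_of_pos (hs n hn)] using this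
    rw [h1, h2, ← Finset.sum_add_distrib, Finset.sum_div]
    exact Finset.sum_congr rfl (fun n _ => by ring)
  -- pointwise sum identity
  have hident : ∀ t : ℝ,
      ∑ n ∈ s', c' n • (Complex.exp (Complex.I * (lam n : ℂ) * (t : ℂ)) • Ψ n) = F (t - T) := by
    intro t
    rw [hs', Finset.sum_union hdisj, hnegs,
      Finset.sum_image (fun a _ b _ h => neg_injective h), hF, ← Finset.sum_add_distrib]
    apply Finset.sum_congr rfl
    intro n hn
    have hn0 : 0 < n := hs n hn
    have hnn : ¬ 0 < -n := by omega
    rw [hc']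
    simp only [if_pos hn0, if_neg hnn, hodd, heven, neg_neg]
    rw [smul_smul, smul_smul, ← add_smul, smul_smul]
    congr 1
    rw [hfe (lam n * (t - T))]
    have e1 : Complex.exp (-(Complex.I * (lam n : ℂ) * (T : ℂ))) *
        Complex.exp (Complex.I * (lam n : ℂ) * (t : ℂ)) =
        Complex.exp (((lam n * (t - T) : ℝ) : ℂ) * I) := by
      rw [← Complex.exp_add]; congr 1; push_cast; ring
    have e2 : Complex.exp (-(Complex.I * ((-lam n : ℝ) : ℂ) * (T : ℂ))) *
        Complex.exp (Complex.I * ((-lam n : ℝ) : ℂ) * (t : ℂ)) =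
        Complex.exp (-(((lam n * (t - T) : ℝ) : ℂ) * I)) := by
      rw [← Complex.exp_add]; congr 1; push_cast; ring
    rw [← e1, ← e2]
    field_simp
  -- apply the exponential Riesz property
  obtain ⟨h1, h2⟩ := hriesz s' hne c'
  rw [hsum'] at h1 h2
  -- identify the integral
  have hint : (∫ t in Set.Ioo (0 : ℝ) (2 * T),
      ‖∑ n ∈ s', c' n • (Complex.exp (Complex.I * (lam n : ℂ) * (t : ℂ)) • Ψ n)‖ ^ 2)
      = 2 * ∫ t in Set.Ioo (0 : ℝ) T, ‖F t‖ ^ 2 := by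
    have step1 : (∫ t in Set.Ioo (0 : ℝ) (2 * T),
        ‖∑ n ∈ s', c' n • (Complex.exp (Complex.I * (lam n : ℂ) * (t : ℂ)) • Ψ n)‖ ^ 2)
        = ∫ t in Set.Ioo (0 : ℝ) (2 * T), ‖F (t - T)‖ ^ 2 := by
      apply integral_congr_ae
      filter_upwards with t
      rw [hident t]
    rw [step1]
    have h2T : (0:ℝ) ≤ 2 * T := by linarith
    have e3 : (∫ t in Set.Ioo (0:ℝ) (2*T), ‖F (t - T)‖ ^ 2)
        = ∫ t in (0:ℝ)..(2*T), ‖F (t - T)‖ ^ 2 := by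
      rw [intervalIntegral.integral_of_le h2T, integral_Ioc_eq_integral_Ioo]
    rw [e3, intervalIntegral.integral_comp_sub_right (fun t => ‖F t‖ ^ 2) T]
    have e4 : (0:ℝ) - T = -T := by ring
    have e5 : 2*T - T = T := by ring
    rw [e4, e5]
    have hsplit : ∫ t in (-T)..T, ‖F t‖^2
        = (∫ t in (-T)..(0:ℝ), ‖F t‖^2) + ∫ t in (0:ℝ)..T, ‖F t‖^2 :=
      (intervalIntegral.integral_add_adjacent_intervals
        (hGcont.intervalIntegrable _ _) (hGcont.intervalIntegrable _ _)).symm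
    have hneg : (∫ t in (-T)..(0:ℝ), ‖F t‖^2) = ∫ t in (0:ℝ)..T, ‖F t‖^2 := by
      have hcn := intervalIntegral.integral_comp_neg (a := (0:ℝ)) (b := T)
        (fun t => ‖F t‖^2)
      rw [neg_zero] at hcn
      rw [← hcn]
      apply intervalIntegral.integral_congr
      intro x _
      simp only
      have hFx : F (-x) = (ε : ℂ) • F x := by
        rw [hF, Finset.smul_sum]
        apply Finset.sum_congr rfl
        intro n _
        have hx : lam n * -x = -(lam n * x) := by ring
        rw [hx, hpar]
        push_cast
        simp only [smul_smul]
        congr 1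
        ring
      rw [hFx, norm_smul]
      have hε1 : ‖(ε:ℂ)‖ = 1 := by rcases hε with h|h <;> simp [h]
      rw [hε1, one_mul]
    rw [hsplit, hneg]
    have e6 : (∫ t in (0:ℝ)..T, ‖F t‖^2) = ∫ t in Set.Ioo (0:ℝ) T, ‖F t‖^2 := by
      rw [intervalIntegral.integral_of_le hT.le, integral_Ioc_eq_integral_Ioo]
    rw [e6]; ring
  rw [hint] at h1 h2
  constructor <;> nlinarith [h1, h2]

/-- If the exponential family `{e^{iλₙ t} Ψₙ}_{n ∈ ℤ'}` (with `λ₋ₙ = -λₙ`, `Ψ₋ₙ = Ψₙ`) is a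
Riesz sequence in `L²((0, 2T); H)`, then the families `{cos(λₙ t) Ψₙ}` and `{sin(λₙ t) Ψₙ}`
(for `n ≥ 1`) are Riesz sequences in `L²((0, T); H)`. -/
theorem cos_sin_riesz_of_exp_riesz
    {H : Type*} [NormedAddCommGroup H] [InnerProductSpace ℂ H] [CompleteSpace H]
    (T : ℝ) (hT : 0 < T) (lam : ℤ → ℝ) (Ψ : ℤ → H)
    (hpos : ∀ n : ℤ, 0 < n → 0 < lam n)
    (hodd : ∀ n : ℤ, lam (-n) = -lam n)
    (heven : ∀ n : ℤ, Ψ (-n) = Ψ n)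
    (m M : ℝ) (hm : 0 < m) (hmM : m ≤ M)
    (hriesz : ∀ (s : Finset ℤ), (∀ n ∈ s, n ≠ 0) → ∀ c : ℤ → ℂ,
      m * ∑ n ∈ s, ‖c n‖ ^ 2 ≤
          (∫ t in Set.Ioo (0 : ℝ) (2 * T),
            ‖∑ n ∈ s, c n • (Complex.exp (Complex.I * (lam n : ℂ) * (t : ℂ)) • Ψ n)‖ ^ 2) ∧
        (∫ t in Set.Ioo (0 : ℝ) (2 * T),
            ‖∑ n ∈ s, c n • (Complex.exp (Complex.I * (lam n : ℂ) * (t : ℂ)) • Ψ n)‖ ^ 2) ≤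
          M * ∑ n ∈ s, ‖c n‖ ^ 2) :
    ∃ m' M' : ℝ, 0 < m' ∧ m' ≤ M' ∧
      (∀ (s : Finset ℤ), (∀ n ∈ s, 0 < n) → ∀ c : ℤ → ℂ,
        m' * ∑ n ∈ s, ‖c n‖ ^ 2 ≤
            (∫ t in Set.Ioo (0 : ℝ) T,
              ‖∑ n ∈ s, c n • ((Real.cos (lam n * t) : ℂ) • Ψ n)‖ ^ 2) ∧
          (∫ t in Set.Ioo (0 : ℝ) T,
              ‖∑ n ∈ s, c n • ((Real.cos (lam n * t) : ℂ) • Ψ n)‖ ^ 2) ≤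
            M' * ∑ n ∈ s, ‖c n‖ ^ 2) ∧
      (∀ (s : Finset ℤ), (∀ n ∈ s, 0 < n) → ∀ c : ℤ → ℂ,
        m' * ∑ n ∈ s, ‖c n‖ ^ 2 ≤
            (∫ t in Set.Ioo (0 : ℝ) T,
              ‖∑ n ∈ s, c n • ((Real.sin (lam n * t) : ℂ) • Ψ n)‖ ^ 2) ∧
          (∫ t in Set.Ioo (0 : ℝ) T,
              ‖∑ n ∈ s, c n • ((Real.sin (lam n * t) : ℂ) • Ψ n)‖ ^ 2) ≤
            M' * ∑ n ∈ s, ‖c n‖ ^ 2) := by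
  refine ⟨m / 4, M / 4, by linarith, by linarith, ?_, ?_⟩
  · intro s hs c
    exact riesz_half_aux T hT lam Ψ hodd heven m M hriesz Real.cos Real.continuous_cos
      1 2 (by simp) (by norm_num) 1 (Or.inl rfl)
      (fun x => by rw [Real.cos_neg, one_mul])
      (fun θ => by rw [Complex.ofReal_cos, Complex.cos]; ring_nf) s hs c
  · intro s hs c
    exact riesz_half_aux T hT lam Ψ hodd heven m M hriesz Real.sin Real.continuous_sin
      (-1) (2 * Complex.I) (by simp) (by simp) (-1) (Or.inr rfl)
      (fun x => by rw [Real.sin_neg]; ring)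
      (fun θ => by
        rw [Complex.ofReal_sin, Complex.sin]
        field_simp [Complex.I_ne_zero]
        linear_combination (Complex.exp (-((θ:ℂ) * Complex.I)) -
          Complex.exp ((θ:ℂ) * Complex.I)) * Complex.I_sq) s hs c
end

section
/- Let λ > 0, T > 0, K : [0, T] → ℝ continuous, and let ψ : [0, T] → ℝ be twice continuously differentiable with ψ''(t) = −λ² ψ(t) + ∫₀ᵗ K(t − s) ψ(s) ds for all t ∈ [0, T], ψ(0) = 0 and ψ'(0) = 1. Then ψ satisfies the Volterra integral equation ψ(t) = (1/λ) sin(λ t) + ∫₀ᵗ [ (1/λ) ∫₀^{t−s} K(r) sin(λ(t − s − r)) dr ] ψ(s) ds for all t ∈ [0, T]. -/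
open Set intervalIntegral

open MeasureTheory Function

lemma triangle_swap (t : ℝ) (ht : 0 ≤ t) (H : ℝ → ℝ → ℝ)
    (hH : Continuous (Function.uncurry H)) :
    ∫ s in (0:ℝ)..t, ∫ r in (0:ℝ)..s, H s r = ∫ r in (0:ℝ)..t, ∫ s in r..t, H s r := by
  set F : ℝ × ℝ → ℝ := ({p : ℝ × ℝ | p.2 ≤ p.1}).indicator (uncurry H) with hF
  have hmeas : MeasurableSet {p : ℝ × ℝ | p.2 ≤ p.1} :=
    measurableSet_le measurable_snd measurable_fst
  have hInt : Integrable (fun (s r : ℝ) => F (s, r)).uncurry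
      ((volume.restrict (Ioc 0 t)).prod (volume.restrict (Ioc 0 t))) := by
    have : (fun (s r : ℝ) => F (s, r)).uncurry = F := rfl
    rw [this, Measure.prod_restrict]
    refine Integrable.indicator ?_ hmeas
    refine IntegrableOn.mono_set ?_ (prod_mono Ioc_subset_Icc_self Ioc_subset_Icc_self)
    exact hH.continuousOn.integrableOn_compact (isCompact_Icc.prod isCompact_Icc)
  have swap := MeasureTheory.integral_integral_swap hInt
  have lhs : ∫ s in (0:ℝ)..t, ∫ r in (0:ℝ)..s, H s r
      = ∫ s in Ioc (0:ℝ) t, ∫ r in Ioc (0:ℝ) t, F (s, r) := by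
    rw [intervalIntegral.integral_of_le ht]
    refine setIntegral_congr_fun measurableSet_Ioc fun s hs => ?_
    have : (fun r => F (s, r)) = (Iic s).indicator (H s) := by
      funext r
      simp only [hF, indicator, mem_setOf_eq, mem_Iic, uncurry]
    rw [this, setIntegral_indicator measurableSet_Iic,
      Ioc_inter_Iic, min_eq_right hs.2, intervalIntegral.integral_of_le hs.1.le]
  have rhs : ∫ r in (0:ℝ)..t, ∫ s in r..t, H s r
      = ∫ r in Ioc (0:ℝ) t, ∫ s in Ioc (0:ℝ) t, F (s, r) := by
    rw [intervalIntegral.integral_of_le ht]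
    refine setIntegral_congr_fun measurableSet_Ioc fun r hr => ?_
    have : (fun s => F (s, r)) = (Ici r).indicator (fun s => H s r) := by
      funext s
      simp only [hF, indicator, mem_setOf_eq, mem_Ici, uncurry]
    rw [this, setIntegral_indicator measurableSet_Ici]
    have : Ioc (0:ℝ) t ∩ Ici r = Icc r t := by
      ext x; simp only [mem_inter_iff, mem_Ioc, mem_Ici, mem_Icc]
      constructor
      · rintro ⟨⟨_, h2⟩, h3⟩; exact ⟨h3, h2⟩
      · rintro ⟨h1, h2⟩; exact ⟨⟨lt_of_lt_of_le hr.1 h1, h2⟩, h1⟩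
    rw [this, integral_Icc_eq_integral_Ioc, intervalIntegral.integral_of_le hr.2]
  rw [lhs, rhs]
  exact swap

lemma energy_unique (lam T : ℝ) (hlam : 0 < lam) (w w' : ℝ → ℝ)
    (hw : ∀ t ∈ Icc (0:ℝ) T, HasDerivAt w (w' t) t)
    (hw' : ∀ t ∈ Icc (0:ℝ) T, HasDerivAt w' (-lam ^ 2 * w t) t)
    (h0 : w 0 = 0) (h1 : w' 0 = 0) : ∀ t ∈ Icc (0:ℝ) T, w t = 0 := by
  set E : ℝ → ℝ := fun x => w' x ^ 2 + lam ^ 2 * w x ^ 2 with hE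
  have hEderiv : ∀ x ∈ Icc (0:ℝ) T, HasDerivAt E 0 x := by
    intro x hx
    have h := (((hw' x hx).pow 2)).add (((hw x hx).pow 2).const_mul (lam ^ 2))
    exact h.congr_deriv (by ring)
  have hEcont : ContinuousOn E (Icc 0 T) := fun x hx =>
    (hEderiv x hx).continuousAt.continuousWithinAt
  have hconst : ∀ x ∈ Icc (0:ℝ) T, E x = E 0 :=
    constant_of_has_deriv_right_zero hEcont fun x hx =>
      (hEderiv x (Ico_subset_Icc_self hx)).hasDerivWithinAt
  intro t ht
  have hEt := hconst t ht
  have hE0 : E 0 = 0 := by simp [hE, h0, h1]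
  rw [hE0] at hEt
  simp only [hE] at hEt
  have h3 : (lam * w t) ^ 2 = 0 := by nlinarith [sq_nonneg (w' t), sq_nonneg (lam * w t)]
  have h4 : lam * w t = 0 := by
    exact pow_eq_zero_iff (two_ne_zero) |>.mp h3
  exact (mul_eq_zero.mp h4).resolve_left hlam.ne'

/-- The second-order equation with memory `ψ'' = -λ² ψ + K * ψ`, `ψ(0) = 0`, `ψ'(0) = 1`
is equivalent to the Volterra integral equation
`ψ(t) = (1/λ) sin(λt) + ∫₀ᵗ [(1/λ) ∫₀^{t-s} K(r) sin(λ(t-s-r)) dr] ψ(s) ds`. -/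
theorem memory_oscillator_volterra_form
    (lam T : ℝ) (hlam : 0 < lam) (hT : 0 < T)
    (K : ℝ → ℝ) (hK : ContinuousOn K (Icc 0 T))
    (ψ ψ' ψ'' : ℝ → ℝ)
    (hψ : ∀ t ∈ Icc 0 T, HasDerivAt ψ (ψ' t) t)
    (hψ' : ∀ t ∈ Icc 0 T, HasDerivAt ψ' (ψ'' t) t)
    (hψ'' : ContinuousOn ψ'' (Icc 0 T))
    (heq : ∀ t ∈ Icc 0 T,
      ψ'' t = -lam ^ 2 * ψ t + ∫ s in (0 : ℝ)..t, K (t - s) * ψ s)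
    (h0 : ψ 0 = 0) (h1 : ψ' 0 = 1) :
    ∀ t ∈ Icc 0 T,
      ψ t = (1 / lam) * Real.sin (lam * t) +
        ∫ s in (0 : ℝ)..t,
          ((1 / lam) * ∫ r in (0 : ℝ)..(t - s), K r * Real.sin (lam * (t - s - r))) * ψ s := by
  have hT' : (0:ℝ) ≤ T := hT.le
  set Kt : ℝ → ℝ := IccExtend hT' ((Icc (0:ℝ) T).restrict K) with hKt
  have hKtc : Continuous Kt := hK.restrict.comp continuous_projIcc
  have hKt_eq : ∀ x ∈ Icc (0:ℝ) T, Kt x = K x := fun x hx => by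
    rw [hKt, IccExtend_of_mem hT' _ hx]; rfl
  have hψcont : ContinuousOn ψ (Icc 0 T) := fun x hx =>
    (hψ x hx).continuousAt.continuousWithinAt
  set Ψ : ℝ → ℝ := IccExtend hT' ((Icc (0:ℝ) T).restrict ψ) with hΨ
  have hΨc : Continuous Ψ := hψcont.restrict.comp continuous_projIcc
  have hΨ_eq : ∀ x ∈ Icc (0:ℝ) T, Ψ x = ψ x := fun x hx => by
    rw [hΨ, IccExtend_of_mem hT' _ hx]; rfl
  -- the extended forcing term
  set g : ℝ → ℝ := fun x => ∫ u in (0:ℝ)..x, Kt u * Ψ (x - u) with hg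
  have hgc : Continuous g := by
    apply continuous_parametric_intervalIntegral_of_continuous
      (f := fun (x : ℝ) (u : ℝ) => Kt u * Ψ (x - u)) ?_ continuous_id
    exact (hKtc.comp continuous_snd).mul (hΨc.comp (continuous_fst.sub continuous_snd))
  have hg_eq : ∀ t ∈ Icc (0:ℝ) T, (∫ s in (0:ℝ)..t, K (t - s) * ψ s) = g t := by
    intro t ht
    have step1 : (∫ s in (0:ℝ)..t, K (t - s) * ψ s)
        = ∫ s in (0:ℝ)..t, Kt (t - s) * Ψ s := by
      refine integral_congr fun s hs => ?_
      rw [uIcc_of_le ht.1] at hs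
      have h1 : t - s ∈ Icc (0:ℝ) T := ⟨by linarith [hs.2], by linarith [hs.1, ht.2]⟩
      have h2 : s ∈ Icc (0:ℝ) T := ⟨hs.1, le_trans hs.2 ht.2⟩
      rw [hKt_eq _ h1, hΨ_eq _ h2]
    have step2 : (∫ s in (0:ℝ)..t, Kt (t - s) * Ψ s)
        = ∫ u in (0:ℝ)..t, Kt u * Ψ (t - u) := by
      have := intervalIntegral.integral_comp_sub_left
        (a := 0) (b := t) (fun u => Kt u * Ψ (t - u)) t
      simpa using this
    rw [step1, step2]
  -- variation of constants candidate
  set A : ℝ → ℝ := fun x => ∫ s in (0:ℝ)..x, Real.cos (lam * s) * g s with hA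
  set B : ℝ → ℝ := fun x => ∫ s in (0:ℝ)..x, Real.sin (lam * s) * g s with hB
  have hcA : Continuous fun s => Real.cos (lam * s) * g s :=
    (Real.continuous_cos.comp (continuous_const.mul continuous_id)).mul hgc
  have hcB : Continuous fun s => Real.sin (lam * s) * g s :=
    (Real.continuous_sin.comp (continuous_const.mul continuous_id)).mul hgc
  have hAd : ∀ x : ℝ, HasDerivAt A (Real.cos (lam * x) * g x) x := fun x =>
    integral_hasDerivAt_right (hcA.intervalIntegrable 0 x)
      (hcA.stronglyMeasurableAtFilter _ _) hcA.continuousAt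
  have hBd : ∀ x : ℝ, HasDerivAt B (Real.sin (lam * x) * g x) x := fun x =>
    integral_hasDerivAt_right (hcB.intervalIntegrable 0 x)
      (hcB.stronglyMeasurableAtFilter _ _) hcB.continuousAt
  set u : ℝ → ℝ := fun x => (1 / lam) * Real.sin (lam * x) +
      (1 / lam) * (Real.sin (lam * x) * A x - Real.cos (lam * x) * B x) with hu
  set u' : ℝ → ℝ := fun x =>
      Real.cos (lam * x) * (1 + A x) + Real.sin (lam * x) * B x with hu'
  have hsin : ∀ x : ℝ, HasDerivAt (fun y => Real.sin (lam * y))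
      (Real.cos (lam * x) * lam) x := fun x => by
    simpa using (HasDerivAt.sin ((hasDerivAt_id x).const_mul lam))
  have hcos : ∀ x : ℝ, HasDerivAt (fun y => Real.cos (lam * y))
      (-Real.sin (lam * x) * lam) x := fun x => by
    simpa [mul_comm] using (HasDerivAt.cos ((hasDerivAt_id x).const_mul lam))
  have hud : ∀ x : ℝ, HasDerivAt u (u' x) x := by
    intro x
    have h := (((hsin x).const_mul (1/lam))).add
      ((((hsin x).mul (hAd x)).sub ((hcos x).mul (hBd x))).const_mul (1/lam))
    refine h.congr_deriv ?_
    symm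
    simp only [hu']
    field_simp
    ring
  have hu'd : ∀ x : ℝ, HasDerivAt u' (-lam ^ 2 * u x + g x) x := by
    intro x
    have h := ((hcos x).mul ((hasDerivAt_const x (1:ℝ)).add (hAd x))).add
      ((hsin x).mul (hBd x))
    refine h.congr_deriv ?_
    symm
    simp only [hu]
    have h2 : Real.sin (lam*x) ^ 2 + Real.cos (lam*x) ^ 2 = 1 := Real.sin_sq_add_cos_sq _
    field_simp
    simp only [Pi.add_apply]
    linear_combination (-g x) * h2
  have hu0 : u 0 = 0 := by simp [hu, hA, hB]
  have hu'0 : u' 0 = 1 := by simp [hu', hA, hB]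
  -- uniqueness: ψ = u on [0, T]
  have hψu : ∀ t ∈ Icc (0:ℝ) T, ψ t = u t := by
    intro t ht
    have := energy_unique lam T hlam (fun x => ψ x - u x) (fun x => ψ' x - u' x)
      (fun x hx => (hψ x hx).sub (hud x))
      (fun x hx => by
        have h := (hψ' x hx).sub (hu'd x)
        refine h.congr_deriv ?_
        symm
        rw [heq x hx, hg_eq x hx]
        ring)
      (by simp [h0, hu0]) (by simp [h1, hu'0]) t ht
    have h5 : ψ t - u t = 0 := this
    linarith
  intro t ht
  rw [hψu t ht]
  -- now show u t equals the RHS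
  have ht0 : (0:ℝ) ≤ t := ht.1
  simp only [hu]
  congr 1
  set H : ℝ → ℝ → ℝ := fun s r => (Real.sin (lam * (t - s)) * Kt (s - r)) * Ψ r with hH
  have hHc : Continuous (Function.uncurry H) := by
    apply Continuous.mul
    · apply Continuous.mul
      · exact Real.continuous_sin.comp (continuous_const.mul (continuous_const.sub continuous_fst))
      · exact hKtc.comp (continuous_fst.sub continuous_snd)
    · exact hΨc.comp continuous_snd
  have stepa : Real.sin (lam * t) * A t - Real.cos (lam * t) * B t
      = ∫ s in (0:ℝ)..t, Real.sin (lam * (t - s)) * g s := by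
    simp only [hA, hB]
    rw [← intervalIntegral.integral_const_mul, ← intervalIntegral.integral_const_mul, ← integral_sub
      (f := fun s => Real.sin (lam * t) * (Real.cos (lam * s) * g s))
      (g := fun s => Real.cos (lam * t) * (Real.sin (lam * s) * g s))
      ((continuous_const.mul hcA).intervalIntegrable 0 t)
      ((continuous_const.mul hcB).intervalIntegrable 0 t)]
    refine integral_congr fun s hs => ?_
    rw [show lam * (t - s) = lam * t - lam * s by ring, Real.sin_sub]
    ring
  have stepb : ∀ s : ℝ, g s = ∫ r in (0:ℝ)..s, Kt (s - r) * Ψ r := by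
    intro s
    have h := intervalIntegral.integral_comp_sub_left
      (a := (0:ℝ)) (b := s) (fun u => Kt u * Ψ (s - u)) s
    simp only [sub_self, sub_zero, sub_sub_cancel] at h
    simp only [hg]
    exact h.symm
  have hswap := triangle_swap t ht0 H hHc
  have lhs_eq : (∫ s in (0:ℝ)..t, Real.sin (lam * (t - s)) * g s)
      = ∫ s in (0:ℝ)..t, ∫ r in (0:ℝ)..s, H s r := by
    refine integral_congr fun s hs => ?_
    rw [stepb s, ← intervalIntegral.integral_const_mul]
    refine integral_congr fun r hr => ?_
    simp only [hH]
    ring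
  have rhs_eq : (∫ r in (0:ℝ)..t, ∫ s in r..t, H s r)
      = ∫ r in (0:ℝ)..t, (∫ s in r..t, Real.sin (lam * (t - s)) * Kt (s - r)) * Ψ r := by
    refine integral_congr fun r hr => ?_
    simp only [hH]
    rw [← intervalIntegral.integral_mul_const]
  have stepd : ∀ r ∈ Icc (0:ℝ) t, (∫ s in r..t, Real.sin (lam * (t - s)) * Kt (s - r))
      = ∫ x in (0:ℝ)..(t - r), K x * Real.sin (lam * (t - r - x)) := by
    intro r hr
    have hd := intervalIntegral.integral_comp_add_right
      (a := (0:ℝ)) (b := t - r) (fun s => Real.sin (lam * (t - s)) * Kt (s - r)) r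
    rw [zero_add, sub_add_cancel] at hd
    rw [← hd]
    refine integral_congr fun x hx => ?_
    rw [uIcc_of_le (by linarith [hr.2] : (0:ℝ) ≤ t - r)] at hx
    have hxT : x ∈ Icc (0:ℝ) T := ⟨hx.1, by linarith [hx.2, hr.1, ht.2]⟩
    show Real.sin (lam * (t - (x + r))) * Kt (x + r - r) = K x * Real.sin (lam * (t - r - x))
    rw [add_sub_cancel_right, hKt_eq _ hxT,
      show t - (x + r) = t - r - x by ring, mul_comm]
  calc (1/lam) * (Real.sin (lam * t) * A t - Real.cos (lam * t) * B t)
      = (1/lam) * ∫ r in (0:ℝ)..t,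
          (∫ s in r..t, Real.sin (lam * (t - s)) * Kt (s - r)) * Ψ r := by
        rw [stepa, lhs_eq, hswap, rhs_eq]
    _ = ∫ s in (0:ℝ)..t,
          ((1 / lam) * ∫ r in (0:ℝ)..(t - s), K r * Real.sin (lam * (t - s - r))) * ψ s := by
        rw [← intervalIntegral.integral_const_mul]
        refine integral_congr fun s hs => ?_
        rw [uIcc_of_le ht0] at hs
        rw [stepd s hs, hΨ_eq s ⟨hs.1, le_trans hs.2 ht.2⟩]
        ring
end

section
/- Let T > 0, b ∈ ℝ, K : [0, T] → ℝ continuous, and let λ_1, …, λ_N be positive real numbers such that λ_1², …, λ_N² are pairwise distinct. For each n, let ψ_n : [0, T] → ℝ be the twice continuously differentiable solution of ψ_n''(t) = −λ_n² ψ_n(t) + b ψ_n(t) + ∫₀ᵗ K(t − s) ψ_n(s) ds with ψ_n(0) = 0 and ψ_n'(0) = 1. Let H be a real normed vector space and v_1, …, v_N ∈ H. If Σ_{n=1}^{N} ψ_n(t) · v_n = 0 for every t ∈ [0, T], then v_n = 0 for every n = 1, …, N. -/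
open Set intervalIntegral

/-- Pass from the vanishing of a function on `[0,T]` to the vanishing of its derivative. -/
private lemma deriv_pass {T : ℝ} (hT : 0 < T) (F G : ℝ → ℝ)
    (hd : ∀ t ∈ Icc 0 T, HasDerivAt F (G t) t)
    (hGc : ContinuousOn G (Icc 0 T))
    (hF : ∀ t ∈ Icc 0 T, F t = 0) :
    ∀ t ∈ Icc 0 T, G t = 0 := by
  have hIoo : ∀ t ∈ Ioo (0:ℝ) T, G t = 0 := by
    intro t ht
    have hmem : Icc (0:ℝ) T ∈ nhds t :=
      Filter.mem_of_superset (isOpen_Ioo.mem_nhds ht) Ioo_subset_Icc_self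
    have hFe : F =ᶠ[nhds t] (fun _ => 0) :=
      Filter.eventuallyEq_of_mem hmem hF
    have h0 : HasDerivAt F 0 t :=
      (hasDerivAt_const t (0:ℝ)).congr_of_eventuallyEq hFe
    exact (hd t (Ioo_subset_Icc_self ht)).unique h0
  intro t ht
  have htc : t ∈ closure (Ioo (0:ℝ) T) := by
    rwa [closure_Ioo hT.ne]
  have hnb : (nhdsWithin t (Ioo (0:ℝ) T)).NeBot :=
    mem_closure_iff_nhdsWithin_neBot.mp htc
  have h1 : Filter.Tendsto G (nhdsWithin t (Ioo (0:ℝ) T)) (nhds (G t)) :=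
    (hGc t ht).mono Ioo_subset_Icc_self
  have h2 : Filter.Tendsto G (nhdsWithin t (Ioo (0:ℝ) T)) (nhds 0) := by
    refine Filter.Tendsto.congr' ?_ tendsto_const_nhds
    exact (eventually_mem_nhdsWithin.mono fun x hx => (hIoo x hx).symm)
  exact tendsto_nhds_unique h1 h2

/-- If `ψ₁, …, ψ_N` solve `ψₙ'' = -λₙ² ψₙ + b ψₙ + K * ψₙ`, `ψₙ(0) = 0`, `ψₙ'(0) = 1`, with
`λₙ > 0` and the `λₙ²` pairwise distinct, and if `∑ₙ ψₙ(t) vₙ = 0` on `[0, T]` for vectors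
`vₙ` in a real normed space, then all `vₙ` vanish. -/
theorem finite_sum_vanishing_forces_zero
    (T : ℝ) (hT : 0 < T) (b : ℝ) (K : ℝ → ℝ) (hK : ContinuousOn K (Icc 0 T))
    (N : ℕ) (lam : Fin N → ℝ) (hpos : ∀ n, 0 < lam n)
    (hdist : ∀ n m : Fin N, lam n ^ 2 = lam m ^ 2 → n = m)
    (ψ ψ' ψ'' : Fin N → ℝ → ℝ)
    (hψ : ∀ n, ∀ t ∈ Icc 0 T, HasDerivAt (ψ n) (ψ' n t) t)
    (hψ' : ∀ n, ∀ t ∈ Icc 0 T, HasDerivAt (ψ' n) (ψ'' n t) t)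
    (hψ'' : ∀ n, ContinuousOn (ψ'' n) (Icc 0 T))
    (heq : ∀ n, ∀ t ∈ Icc 0 T,
      ψ'' n t = -lam n ^ 2 * ψ n t + b * ψ n t + ∫ s in (0 : ℝ)..t, K (t - s) * ψ n s)
    (h0 : ∀ n, ψ n 0 = 0) (h1 : ∀ n, ψ' n 0 = 1)
    {H : Type*} [NormedAddCommGroup H] [NormedSpace ℝ H]
    (v : Fin N → H)
    (hsum : ∀ t ∈ Icc 0 T, ∑ n, ψ n t • v n = 0) :
    ∀ n, v n = 0 := by
  -- continuity of the ψ's and ψ''s on the interval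
  have hψc : ∀ n, ContinuousOn (ψ n) (Icc 0 T) := fun n =>
    fun t ht => ((hψ n t ht).continuousAt).continuousWithinAt
  have hψ'c : ∀ n, ContinuousOn (ψ' n) (Icc 0 T) := fun n =>
    fun t ht => ((hψ' n t ht).continuousAt).continuousWithinAt
  -- the key scalar step: if ∑ ψₙ(t) cₙ = 0 on [0,T] then ∑ ψₙ(t) (λₙ² cₙ) = 0 on [0,T]
  have step : ∀ c : Fin N → ℝ, (∀ t ∈ Icc 0 T, ∑ n, ψ n t * c n = 0) →
      ∀ t ∈ Icc 0 T, ∑ n, ψ n t * (lam n ^ 2 * c n) = 0 := by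
    intro c hc
    have hd1 : ∀ t ∈ Icc 0 T, HasDerivAt (fun t => ∑ n, ψ n t * c n)
        (∑ n, ψ' n t * c n) t := by
      intro t ht
      exact HasDerivAt.fun_sum fun n _ => (hψ n t ht).mul_const (c n)
    have hG1c : ContinuousOn (fun t => ∑ n, ψ' n t * c n) (Icc 0 T) :=
      continuousOn_finset_sum _ fun n _ => (hψ'c n).mul continuousOn_const
    have hc1 : ∀ t ∈ Icc 0 T, ∑ n, ψ' n t * c n = 0 :=
      deriv_pass hT _ _ hd1 hG1c hc
    have hd2 : ∀ t ∈ Icc 0 T, HasDerivAt (fun t => ∑ n, ψ' n t * c n)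
        (∑ n, ψ'' n t * c n) t := by
      intro t ht
      exact HasDerivAt.fun_sum fun n _ => (hψ' n t ht).mul_const (c n)
    have hG2c : ContinuousOn (fun t => ∑ n, ψ'' n t * c n) (Icc 0 T) :=
      continuousOn_finset_sum _ fun n _ => (hψ'' n).mul continuousOn_const
    have hc2 : ∀ t ∈ Icc 0 T, ∑ n, ψ'' n t * c n = 0 :=
      deriv_pass hT _ _ hd2 hG2c hc1
    -- now use the equation
    intro t ht
    have ht0 : (0:ℝ) ≤ t := ht.1
    -- the integral term vanishes
    have hInt : ∀ n : Fin N, IntervalIntegrable (fun s => K (t - s) * ψ n s * c n)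
        MeasureTheory.volume 0 t := by
      intro n
      apply ContinuousOn.intervalIntegrable
      rw [uIcc_of_le ht0]
      have hsub : Icc (0:ℝ) t ⊆ Icc 0 T := Icc_subset_Icc le_rfl ht.2
      apply ContinuousOn.mul
      apply ContinuousOn.mul
      · apply hK.comp ((continuous_const.sub continuous_id).continuousOn)
        intro s hs
        have hmem : t - s ∈ Icc (0:ℝ) T := ⟨by linarith [hs.2], by linarith [hs.1, ht.2]⟩
        simpa using hmem
      · exact (hψc n).mono hsub
      · exact continuousOn_const
    have hintzero : ∑ n, (∫ s in (0:ℝ)..t, K (t - s) * ψ n s) * c n = 0 := by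
      have : ∀ n : Fin N, (∫ s in (0:ℝ)..t, K (t - s) * ψ n s) * c n
          = ∫ s in (0:ℝ)..t, K (t - s) * ψ n s * c n := by
        intro n
        rw [← intervalIntegral.integral_mul_const]
      rw [Finset.sum_congr rfl fun n _ => this n,
        ← intervalIntegral.integral_finset_sum fun n _ => hInt n]
      have : ∀ s ∈ uIcc (0:ℝ) t, (∑ n, K (t - s) * ψ n s * c n) = 0 := by
        intro s hs
        rw [uIcc_of_le ht0] at hs
        have hsIcc : s ∈ Icc (0:ℝ) T := ⟨hs.1, le_trans hs.2 ht.2⟩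
        have := hc s hsIcc
        calc ∑ n, K (t - s) * ψ n s * c n = K (t - s) * ∑ n, ψ n s * c n := by
              rw [Finset.mul_sum]; exact Finset.sum_congr rfl fun n _ => by ring
          _ = 0 := by rw [this, mul_zero]
      rw [intervalIntegral.integral_congr this]
      simp
    have hexp : ∑ n, ψ'' n t * c n =
        ∑ n, (-lam n ^ 2 * ψ n t * c n) + b * ∑ n, ψ n t * c n
          + ∑ n, (∫ s in (0:ℝ)..t, K (t - s) * ψ n s) * c n := by
      rw [Finset.mul_sum, ← Finset.sum_add_distrib, ← Finset.sum_add_distrib]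
      refine Finset.sum_congr rfl fun n _ => ?_
      rw [heq n t ht]; ring
    rw [hc2 t ht, hc t ht, hintzero, mul_zero, add_zero, add_zero] at hexp
    have : ∑ n, ψ n t * (lam n ^ 2 * c n) = -∑ n, (-lam n ^ 2 * ψ n t * c n) := by
      rw [← Finset.sum_neg_distrib]
      exact Finset.sum_congr rfl fun n _ => by ring
    rw [this, ← hexp, neg_zero]
  -- iterate the step: all powers
  have iter : ∀ c : Fin N → ℝ, (∀ t ∈ Icc 0 T, ∑ n, ψ n t * c n = 0) →
      ∀ k : ℕ, ∀ t ∈ Icc 0 T, ∑ n, ψ n t * ((lam n ^ 2) ^ k * c n) = 0 := by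
    intro c hc k
    induction k with
    | zero => simpa using hc
    | succ k ih =>
      have := step (fun n => (lam n ^ 2) ^ k * c n) ih
      intro t ht
      have h := this t ht
      rw [← h]
      exact Finset.sum_congr rfl fun n _ => by ring
  -- scalar conclusion
  have scalar : ∀ c : Fin N → ℝ, (∀ t ∈ Icc 0 T, ∑ n, ψ n t * c n = 0) →
      ∀ n, c n = 0 := by
    intro c hc n₀
    -- for every t, ψ n₀ t * c n₀ = 0
    have hpt : ∀ t ∈ Icc 0 T, ψ n₀ t * c n₀ = 0 := by
      intro t ht
      have hk : ∀ k : ℕ, ∑ n, (lam n ^ 2) ^ k * (ψ n t * c n) = 0 := by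
        intro k
        have := iter c hc k t ht
        rw [← this]
        exact Finset.sum_congr rfl fun n _ => by ring
      have hpoly : ∀ p : Polynomial ℝ, ∑ n, p.eval (lam n ^ 2) * (ψ n t * c n) = 0 := by
        intro p
        have : ∀ n : Fin N, p.eval (lam n ^ 2) * (ψ n t * c n)
            = ∑ i ∈ Finset.range (p.natDegree + 1),
                p.coeff i * ((lam n ^ 2) ^ i * (ψ n t * c n)) := by
          intro n
          rw [Polynomial.eval_eq_sum_range, Finset.sum_mul]
          exact Finset.sum_congr rfl fun i _ => by ring
        rw [Finset.sum_congr rfl fun n _ => this n, Finset.sum_comm]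
        refine Finset.sum_eq_zero fun i _ => ?_
        rw [← Finset.mul_sum, hk i, mul_zero]
      set p : Polynomial ℝ :=
        ∏ m ∈ Finset.univ.erase n₀, (Polynomial.X - Polynomial.C (lam m ^ 2)) with hp
      have hpn : ∀ n : Fin N, n ≠ n₀ → p.eval (lam n ^ 2) = 0 := by
        intro n hn
        rw [hp, Polynomial.eval_prod]
        refine Finset.prod_eq_zero (Finset.mem_erase.mpr ⟨hn, Finset.mem_univ n⟩) ?_
        simp
      have hpne : p.eval (lam n₀ ^ 2) ≠ 0 := by
        rw [hp, Polynomial.eval_prod]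
        refine Finset.prod_ne_zero_iff.mpr fun m hm => ?_
        simp only [Polynomial.eval_sub, Polynomial.eval_X, Polynomial.eval_C]
        refine sub_ne_zero.mpr fun h => (Finset.mem_erase.mp hm).1 (hdist m n₀ h.symm)
      have := hpoly p
      rw [Finset.sum_eq_single n₀ (fun n _ hn => by rw [hpn n hn, zero_mul])
        (fun h => absurd (Finset.mem_univ n₀) h)] at this
      exact (mul_eq_zero.mp this).resolve_left hpne
    -- now ψ n₀ is not identically zero near 0 since ψ n₀ '(0) = 1
    by_contra hcn
    have hzero : ∀ t ∈ Icc 0 T, ψ n₀ t = 0 := by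
      intro t ht
      have := hpt t ht
      exact (mul_eq_zero.mp this).resolve_right hcn
    have h0mem : (0:ℝ) ∈ Icc (0:ℝ) T := ⟨le_rfl, hT.le⟩
    have hder : HasDerivWithinAt (ψ n₀) 1 (Icc 0 T) 0 := by
      have := (hψ n₀ 0 h0mem).hasDerivWithinAt (s := Icc 0 T)
      rwa [h1 n₀] at this
    have hder0 : HasDerivWithinAt (ψ n₀) 0 (Icc 0 T) 0 := by
      have hc0 : HasDerivWithinAt (fun _ : ℝ => (0:ℝ)) 0 (Icc 0 T) 0 :=
        hasDerivWithinAt_const 0 _ 0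
      exact hc0.congr (fun t ht => hzero t ht) (hzero 0 h0mem)
    have hud : UniqueDiffWithinAt ℝ (Icc (0:ℝ) T) 0 := uniqueDiffOn_Icc hT 0 h0mem
    have : (1:ℝ) = 0 := hud.eq_deriv _ hder hder0
    norm_num at this
  -- conclude via the dual space
  intro n
  refine NormedSpace.eq_zero_of_forall_dual_eq_zero ℝ fun f => ?_
  have : ∀ t ∈ Icc 0 T, ∑ m, ψ m t * f (v m) = 0 := by
    intro t ht
    have := congrArg f (hsum t ht)
    rw [map_sum, map_zero] at this
    rw [← this]
    exact Finset.sum_congr rfl fun m _ => by rw [map_smul, smul_eq_mul]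
  exact scalar _ this n
end

section
/- Let T > 0, b ∈ ℝ, K : [0, T] → ℝ continuous, (λ_n)_{n ≥ 1} positive real numbers, and for each n let ψ_n : [0, T] → ℝ be the twice continuously differentiable solution of ψ_n''(t) = −λ_n² ψ_n(t) + b ψ_n(t) + ∫₀ᵗ K(t − s) ψ_n(s) ds with ψ_n(0) = 0 and ψ_n'(0) = 1. Let H be a real Banach space and (v_n)_{n ≥ 1} a sequence in H. Assume: (i) the series Σ_n ψ_n(t) v_n converges uniformly on [0, T] with sum 0 for every t; (ii) the series Σ_n ψ_n'(t) v_n converges uniformly on [0, T]; (iii) the series Σ_n λ_n² ψ_n(t) v_n converges uniformly on [0, T]. Then Σ_n λ_n² ψ_n(t) v_n = 0 for every t ∈ [0, T]. -/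
open Set intervalIntegral Filter

/-- Scalar multiplication preserves uniform convergence on a set. -/
lemma tendstoUniformlyOn_const_smul {α : Type*} {H : Type*} [NormedAddCommGroup H]
    [NormedSpace ℝ H] {F : ℕ → α → H} {f : α → H} {s : Set α} (c : ℝ)
    (h : TendstoUniformlyOn F f atTop s) :
    TendstoUniformlyOn (fun N x => c • F N x) (fun x => c • f x) atTop s := by
  rw [Metric.tendstoUniformlyOn_iff] at h ⊢
  intro ε hε
  have hc : 0 < |c| + 1 := by positivity
  filter_upwards [h (ε / (|c| + 1)) (by positivity)] with N hN x hx
  have hlt := hN x hx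
  have hd : (0:ℝ) ≤ dist (f x) (F N x) := dist_nonneg
  have habs : (0:ℝ) ≤ |c| := abs_nonneg c
  calc dist (c • f x) (c • F N x) = |c| * dist (f x) (F N x) := by
        rw [dist_smul₀, Real.norm_eq_abs]
    _ ≤ (|c| + 1) * dist (f x) (F N x) := by nlinarith
    _ < (|c| + 1) * (ε / (|c| + 1)) := mul_lt_mul_of_pos_left hlt hc
    _ = ε := by field_simp

/-- Iteration step in the proof of controllability: if the series `∑ ψₙ(t) vₙ` converges
uniformly on `[0, T]` with sum `0`, the termwise differentiated series `∑ ψₙ'(t) vₙ`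
converges uniformly, and the series `∑ λₙ² ψₙ(t) vₙ` converges uniformly to `S`, then
`S = 0` on `[0, T]`.  Here each `ψₙ` solves `ψₙ'' = -λₙ² ψₙ + b ψₙ + K * ψₙ`,
`ψₙ(0) = 0`, `ψₙ'(0) = 1`. -/
theorem series_iteration_step
    (T : ℝ) (hT : 0 < T) (b : ℝ) (K : ℝ → ℝ) (hK : ContinuousOn K (Icc 0 T))
    (lam : ℕ → ℝ) (hpos : ∀ n, 0 < lam n)
    (ψ ψ' ψ'' : ℕ → ℝ → ℝ)
    (hψ : ∀ n, ∀ t ∈ Icc 0 T, HasDerivAt (ψ n) (ψ' n t) t)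
    (hψ' : ∀ n, ∀ t ∈ Icc 0 T, HasDerivAt (ψ' n) (ψ'' n t) t)
    (hψ'' : ∀ n, ContinuousOn (ψ'' n) (Icc 0 T))
    (heq : ∀ n, ∀ t ∈ Icc 0 T,
      ψ'' n t = -lam n ^ 2 * ψ n t + b * ψ n t + ∫ s in (0 : ℝ)..t, K (t - s) * ψ n s)
    (h0 : ∀ n, ψ n 0 = 0) (h1 : ∀ n, ψ' n 0 = 1)
    {H : Type*} [NormedAddCommGroup H] [NormedSpace ℝ H] [CompleteSpace H]
    (v : ℕ → H)
    (hsum : TendstoUniformlyOn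
      (fun N t => ∑ n ∈ Finset.range N, ψ n t • v n) (fun _ => (0 : H)) atTop (Icc 0 T))
    (hderiv : ∃ g : ℝ → H, TendstoUniformlyOn
      (fun N t => ∑ n ∈ Finset.range N, ψ' n t • v n) g atTop (Icc 0 T))
    (S : ℝ → H)
    (hS : TendstoUniformlyOn
      (fun N t => ∑ n ∈ Finset.range N, (lam n ^ 2 * ψ n t) • v n) S atTop (Icc 0 T)) :
    ∀ t ∈ Icc 0 T, S t = 0 := by
  obtain ⟨g, hg⟩ := hderiv
  set f : ℕ → ℝ → H := fun N t => ∑ n ∈ Finset.range N, ψ n t • v n with hfdef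
  set f' : ℕ → ℝ → H := fun N t => ∑ n ∈ Finset.range N, ψ' n t • v n with hf'def
  set f'' : ℕ → ℝ → H := fun N t => ∑ n ∈ Finset.range N, ψ'' n t • v n with hf''def
  have hopen : IsOpen (Ioo (0:ℝ) T) := isOpen_Ioo
  have hsub : Ioo (0:ℝ) T ⊆ Icc 0 T := Ioo_subset_Icc_self
  -- continuity of each ψ n on [0,T]
  have hψc : ∀ n, ContinuousOn (ψ n) (Icc 0 T) := fun n t ht =>
    ((hψ n t ht).continuousAt).continuousWithinAt
  -- derivative of partial sums
  have hdf : ∀ N, ∀ t ∈ Icc (0:ℝ) T, HasDerivAt (f N) (f' N t) t := by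
    intro N t ht
    exact HasDerivAt.fun_sum fun n _ => (hψ n t ht).smul_const (v n)
  have hdf' : ∀ N, ∀ t ∈ Icc (0:ℝ) T, HasDerivAt (f' N) (f'' N t) t := by
    intro N t ht
    exact HasDerivAt.fun_sum fun n _ => (hψ' n t ht).smul_const (v n)
  -- Step 1 : g = 0 on Ioo 0 T
  have hg0 : ∀ x ∈ Ioo (0:ℝ) T, g x = 0 := by
    intro x hx
    have hder : HasDerivAt (fun _ : ℝ => (0:H)) (g x) x := by
      refine hasDerivAt_of_tendstoUniformlyOn (f := f) hopen (hg.mono hsub) ?_ ?_ hx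
      · exact Eventually.of_forall fun N t ht => hdf N t (hsub ht)
      · exact fun t ht => hsum.tendsto_at (hsub ht)
    exact ((hasDerivAt_const x (0:H)).unique hder).symm
  -- Step 2 : the second derivative partial sums converge uniformly to -S on [0,T]
  -- first: the algebraic identity
  have hident : ∀ N, ∀ t ∈ Icc (0:ℝ) T,
      f'' N t = (b • f N t + ∫ s in (0:ℝ)..t, K (t - s) • f N s)
        - ∑ n ∈ Finset.range N, (lam n ^ 2 * ψ n t) • v n := by
    intro N t ht
    have hint : ∀ n, IntervalIntegrable (fun s => K (t - s) • (ψ n s • v n))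
        MeasureTheory.volume 0 t := by
      intro n
      apply ContinuousOn.intervalIntegrable
      have hsubt : uIcc (0:ℝ) t ⊆ Icc 0 T := by
        rw [uIcc_of_le ht.1]
        exact Icc_subset_Icc le_rfl ht.2
      have hmap : MapsTo (fun s => t - s) (uIcc (0:ℝ) t) (Icc 0 T) := by
        rw [uIcc_of_le ht.1]
        intro s hs
        simp only [mem_Icc] at hs ⊢
        constructor <;> [linarith [hs.2]; linarith [ht.2, hs.1]]
      apply ContinuousOn.smul
      · exact hK.comp (continuous_const.sub continuous_id).continuousOn hmap
      · exact ((hψc n).mono hsubt).smul continuousOn_const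
    have hJ : (∫ s in (0:ℝ)..t, K (t - s) • f N s)
        = ∑ n ∈ Finset.range N, (∫ s in (0:ℝ)..t, K (t - s) * ψ n s) • v n := by
      rw [show (fun s => K (t - s) • f N s)
          = fun s => ∑ n ∈ Finset.range N, K (t - s) • (ψ n s • v n) by
        funext s; simp [hfdef, Finset.smul_sum]]
      rw [intervalIntegral.integral_finset_sum (fun n _ => hint n)]
      refine Finset.sum_congr rfl fun n _ => ?_
      rw [← intervalIntegral.integral_smul_const]
      congr 1; funext s; rw [smul_smul]
    simp only [hf''def, hfdef]
    rw [hJ, Finset.smul_sum, ← Finset.sum_add_distrib, ← Finset.sum_sub_distrib]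
    refine Finset.sum_congr rfl fun n _ => ?_
    rw [heq n t ht, smul_smul, ← add_smul, ← sub_smul]
    congr 1; ring
  -- the convolution term tends to 0 uniformly
  have hMK : ∃ M : ℝ, 0 ≤ M ∧ ∀ x ∈ Icc (0:ℝ) T, |K x| ≤ M := by
    obtain ⟨M, hM⟩ := (isCompact_Icc).exists_bound_of_continuousOn hK
    exact ⟨max M 0, le_max_right _ _, fun x hx =>
      (hM x hx).trans (le_max_left _ _)⟩
  obtain ⟨M, hM0, hMb⟩ := hMK
  have hJ0 : TendstoUniformlyOn
      (fun N t => ∫ s in (0:ℝ)..t, K (t - s) • f N s) (fun _ => (0:H)) atTop (Icc 0 T) := by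
    rw [Metric.tendstoUniformlyOn_iff]
    intro ε hε
    have hC : 0 < M * T + 1 := by positivity
    have hsum' := Metric.tendstoUniformlyOn_iff.mp hsum (ε / (M * T + 1)) (by positivity)
    filter_upwards [hsum'] with N hN t ht
    have hb : ∀ s ∈ Icc (0:ℝ) t, ‖K (t - s) • f N s‖ ≤ M * (ε / (M * T + 1)) := by
      intro s hs
      have hs' : s ∈ Icc (0:ℝ) T := ⟨hs.1, hs.2.trans ht.2⟩
      have hts : t - s ∈ Icc (0:ℝ) T := by
        simp only [mem_Icc] at hs' ⊢
        constructor <;> [linarith [hs.2]; linarith [ht.2, hs'.1]]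
      have h1 : ‖K (t - s) • f N s‖ = |K (t - s)| * ‖f N s‖ := by
        rw [norm_smul, Real.norm_eq_abs]
      rw [h1]
      have h2 : ‖f N s‖ ≤ ε / (M * T + 1) := by
        have := hN s hs'
        rw [dist_comm, dist_zero_right] at this
        exact this.le
      exact mul_le_mul (hMb _ hts) h2 (norm_nonneg _) hM0
    have hnorm : ‖∫ s in (0:ℝ)..t, K (t - s) • f N s‖ ≤ M * (ε / (M * T + 1)) * |t - 0| := by
      apply intervalIntegral.norm_integral_le_of_norm_le_const
      intro s hs
      rw [uIoc_of_le ht.1] at hs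
      exact hb s ⟨hs.1.le, hs.2⟩
    rw [dist_comm, dist_zero_right]
    calc ‖∫ s in (0:ℝ)..t, K (t - s) • f N s‖
        ≤ M * (ε / (M * T + 1)) * |t - 0| := hnorm
      _ ≤ M * (ε / (M * T + 1)) * T := by
          apply mul_le_mul_of_nonneg_left _ (by positivity)
          rw [sub_zero, abs_of_nonneg ht.1]; exact ht.2
      _ = ε * (M * T / (M * T + 1)) := by ring
      _ < ε * 1 := by
          apply mul_lt_mul_of_pos_left _ hε
          rw [div_lt_one hC]; linarith
      _ = ε := mul_one ε
  -- assemble: f'' → (fun t => 0 - S t) uniformly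
  have hbf : TendstoUniformlyOn (fun N t => b • f N t) (fun _ => (0:H)) atTop (Icc 0 T) := by
    have := tendstoUniformlyOn_const_smul b hsum
    simpa using this
  have hf''lim : TendstoUniformlyOn f'' (fun t => (0:H) - S t) atTop (Icc 0 T) := by
    have h1 : TendstoUniformlyOn
        (fun N t => (b • f N t + ∫ s in (0:ℝ)..t, K (t - s) • f N s)
          - ∑ n ∈ Finset.range N, (lam n ^ 2 * ψ n t) • v n)
        (fun t => ((0:H) + 0) - S t) atTop (Icc 0 T) := (hbf.add hJ0).sub hS
    have h2 : TendstoUniformlyOn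
        (fun N t => (b • f N t + ∫ s in (0:ℝ)..t, K (t - s) • f N s)
          - ∑ n ∈ Finset.range N, (lam n ^ 2 * ψ n t) • v n)
        (fun t => (0:H) - S t) atTop (Icc 0 T) := by simpa using h1
    apply h2.congr
    filter_upwards with N
    intro t ht
    exact (hident N t ht).symm
  -- Step 3 : S = 0 on Ioo 0 T
  have hS0 : ∀ x ∈ Ioo (0:ℝ) T, S x = 0 := by
    intro x hx
    have hder : HasDerivAt g ((0:H) - S x) x := by
      refine hasDerivAt_of_tendstoUniformlyOn (f := f') hopen (hf''lim.mono hsub) ?_ ?_ hx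
      · exact Eventually.of_forall fun N t ht => hdf' N t (hsub ht)
      · exact fun t ht => hg.tendsto_at (hsub ht)
    have hgconst : HasDerivAt g (0:H) x := by
      have heq0 : g =ᶠ[nhds x] fun _ => (0:H) :=
        Filter.eventuallyEq_of_mem (hopen.mem_nhds hx) hg0
      exact (hasDerivAt_const x (0:H)).congr_of_eventuallyEq heq0
    have h00 := hgconst.unique hder
    rw [zero_sub] at h00
    exact neg_eq_zero.mp h00.symm
  -- Step 4 : extend to the endpoints by continuity
  have hScont : ContinuousOn S (Icc 0 T) := by
    apply hS.continuousOn
    refine Filter.Eventually.frequently ?_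
    filter_upwards with N
    apply continuousOn_finset_sum
    intro n _
    exact ((continuousOn_const.mul (hψc n))).smul continuousOn_const
  intro t ht
  have htcl : t ∈ closure (Ioo (0:ℝ) T) := by
    rw [closure_Ioo hT.ne]; exact ht
  have hne : (nhdsWithin t (Ioo (0:ℝ) T)).NeBot :=
    mem_closure_iff_nhdsWithin_neBot.mp htcl
  have h1 : Tendsto S (nhdsWithin t (Ioo (0:ℝ) T)) (nhds (S t)) :=
    ((hScont t ht).mono hsub).tendsto
  have h2 : Tendsto S (nhdsWithin t (Ioo (0:ℝ) T)) (nhds (0:H)) := by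
    apply Tendsto.congr' _ tendsto_const_nhds
    filter_upwards [self_mem_nhdsWithin] with y hy
    exact (hS0 y hy).symm
  exact tendsto_nhds_unique h1 h2
end
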